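/- arXiv:1410.2826 — 2 statements merged into one kernel-verified Lean document; each statement's English description precedes it below -/
import Mathlib

section
/- Let γ be a Livsic-type tensor, let v_0,…,v_{d−k−1}, u ∈ ℂ^{d+1} with G := γ(v_0,…,v_{d−k−1}) invertible, and define A_i := G^{−1} ∘ γ(v_0,…,v_{i−1}, u, v_{i+1},…,v_{d−k−1}) ∈ End(ℂ^n) for i = 0,…,d−k−1. Suppose there exist pairwise distinct tuples t^{(1)},…,t^{(r)} ∈ ℂ^{d−k} such that, setting μ_s = u + Σ_j t^{(s)}_j v_j and W_s = ker(γ∧μ_s), the subspaces W_1,…,W_r together span ℂ^n. Then the endomorphisms A_0,…,A_{d−k−1} pairwise commute and are each diagonalizable. (Corollary 2.16: for a very reasonable tensor the pencils γ(V)^{−1}γ(V,u,j) commute and are semi-simple; here the degree condition is expressed through its consequence that the kernel fibers at the intersection points span ℂ^n.) -/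
/-!
STATEMENT 0 (Paper Lemma 2.3). Let `γ : ℂⁿ →ₗ ⋀^{k+1}ℂ^{d+1} ⊗ ℂⁿ` be a Livsic-type
tensor, `v₀,…,v_{d−k−1} ∈ ℂ^{d+1}`, and `μ ≠ 0` in the span of the `vⱼ`.
If `(γ∧μ)(w) = 0` then `γ(v₀,…,v_{d−k−1})(w) = 0`; in particular if `w ≠ 0`
the endomorphism `γ(v₀,…,v_{d−k−1})` is not injective.
-/

noncomputable section

open ExteriorAlgebra TensorProduct

/-- `ℂ^{d+1}`. -/
abbrev Ed (d : ℕ) : Type := Fin (d + 1) → ℂ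

/-- The wedge product `v 0 ∧ v 1 ∧ ⋯` of a finite family of vectors, as an element of the
exterior algebra. -/
def wedgeVecs {d m : ℕ} (v : Fin m → Ed d) : ExteriorAlgebra ℂ (Ed d) :=
  (List.ofFn fun j => ExteriorAlgebra.ι ℂ (v j)).prod

/-- `ω = e₀ ∧ e₁ ∧ ⋯ ∧ e_d`, the generator of the top exterior power. -/
def omegaTop (d : ℕ) : ExteriorAlgebra ℂ (Ed d) :=
  wedgeVecs (fun i : Fin (d + 1) => (Pi.single i 1 : Ed d))

/-- Exterior multiplication by `x` tensored with the identity of `ℂⁿ`: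
`m_x ⊗ id : ⋀E ⊗ ℂⁿ → ⋀E ⊗ ℂⁿ`. -/
def mulTensor {d : ℕ} (n : ℕ) (x : ExteriorAlgebra ℂ (Ed d)) :
    (ExteriorAlgebra ℂ (Ed d)) ⊗[ℂ] (Fin n → ℂ) →ₗ[ℂ]
      (ExteriorAlgebra ℂ (Ed d)) ⊗[ℂ] (Fin n → ℂ) :=
  TensorProduct.map (LinearMap.mulLeft ℂ x) LinearMap.id

/-- The condition that a Livsic-type tensor takes its values in
`⋀^{k+1}ℂ^{d+1} ⊗ ℂⁿ ⊆ ⋀ℂ^{d+1} ⊗ ℂⁿ`. -/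
def IsLivsicTensor (d k n : ℕ)
    (γ : (Fin n → ℂ) →ₗ[ℂ] (ExteriorAlgebra ℂ (Ed d)) ⊗[ℂ] (Fin n → ℂ)) : Prop :=
  ∀ w : Fin n → ℂ,
    γ w ∈ LinearMap.range ((Submodule.subtype (⋀[ℂ]^(k+1) (Ed d))).rTensor (Fin n → ℂ))


/-!
STATEMENT 6 (Corollary 2.16). With `G := γ(v₀,…,v_{d−k−1})` invertible and
`A i := G⁻¹ ∘ γ(v₀,…,v_{i−1},u,v_{i+1},…,v_{d−k−1})`, if there are pairwise distinct tuples
`t⁽¹⁾,…,t⁽ʳ⁾` such that the kernels `W_s = ker (γ∧μ_s)` (with `μ_s = u + Σⱼ t⁽ˢ⁾ⱼ vⱼ`)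
together span `ℂⁿ`, then the `A i` pairwise commute and are diagonalizable (the eigenspaces
of each `A i` span `ℂⁿ`).
-/

section Aux

variable {d n : ℕ}

lemma wedgeVecs_eq_iMulti {m : ℕ} (v : Fin m → Ed d) :
    wedgeVecs v = ExteriorAlgebra.ιMulti ℂ m v :=
  (ExteriorAlgebra.ιMulti_apply (R := ℂ) v).symm

lemma wedgeVecs_snoc {m : ℕ} (v : Fin (m + 1) → Ed d) :
    wedgeVecs v = wedgeVecs (v ∘ Fin.castSucc) * ExteriorAlgebra.ι ℂ (v (Fin.last m)) := by
  unfold wedgeVecs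
  rw [List.ofFn_succ']
  simp [Function.comp]

lemma mulTensor_tmul (x a : ExteriorAlgebra ℂ (Ed d)) (b : Fin n → ℂ) :
    mulTensor n x (a ⊗ₜ[ℂ] b) = (x * a) ⊗ₜ[ℂ] b := rfl

lemma mulTensor_mul (x y : ExteriorAlgebra ℂ (Ed d))
    (z : ExteriorAlgebra ℂ (Ed d) ⊗[ℂ] (Fin n → ℂ)) :
    mulTensor n (x * y) z = mulTensor n x (mulTensor n y z) := by
  have : (mulTensor (d := d) n (x * y)) = (mulTensor n x) ∘ₗ (mulTensor n y) := by
    unfold mulTensor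
    rw [LinearMap.mulLeft_mul, ← TensorProduct.map_comp]
    rfl
  rw [this]; rfl

lemma mulTensor_add (x y : ExteriorAlgebra ℂ (Ed d))
    (z : ExteriorAlgebra ℂ (Ed d) ⊗[ℂ] (Fin n → ℂ)) :
    mulTensor n (x + y) z = mulTensor n x z + mulTensor n y z := by
  have : (mulTensor (d := d) n (x + y)) = mulTensor n x + mulTensor n y := by
    unfold mulTensor
    rw [← TensorProduct.map_add_left]
    congr 1
    refine LinearMap.ext fun a => ?_
    simp [add_mul]
  rw [this]; rfl

lemma mulTensor_smul (c : ℂ) (x : ExteriorAlgebra ℂ (Ed d))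
    (z : ExteriorAlgebra ℂ (Ed d) ⊗[ℂ] (Fin n → ℂ)) :
    mulTensor n (c • x) z = c • mulTensor n x z := by
  have : (mulTensor (d := d) n (c • x)) = c • mulTensor n x := by
    unfold mulTensor
    rw [← TensorProduct.map_smul_left]
    congr 1
    refine LinearMap.ext fun a => ?_
    simp [smul_mul_assoc]
  rw [this]; rfl

lemma mulTensor_zero (z : ExteriorAlgebra ℂ (Ed d) ⊗[ℂ] (Fin n → ℂ)) :
    mulTensor n (0 : ExteriorAlgebra ℂ (Ed d)) z = 0 := by
  have h := mulTensor_smul (d := d) (n := n) (0 : ℂ) 0 z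
  rw [zero_smul, zero_smul] at h
  exact h

lemma mulTensor_neg (x : ExteriorAlgebra ℂ (Ed d))
    (z : ExteriorAlgebra ℂ (Ed d) ⊗[ℂ] (Fin n → ℂ)) :
    mulTensor n (-x) z = - mulTensor n x z := by
  have h := mulTensor_add (d := d) (n := n) x (-x) z
  rw [add_neg_cancel, mulTensor_zero] at h
  exact eq_neg_of_add_eq_zero_left ((add_comm _ _).trans h.symm)

/-- If `ι μ` kills `z` (after tensoring with the identity), then so does any wedge
of vectors one of which is `μ`. -/
lemma mulTensor_wedge_update_eq_zero {m : ℕ} (v : Fin m → Ed d) (i : Fin m) (μ : Ed d)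
    (z : ExteriorAlgebra ℂ (Ed d) ⊗[ℂ] (Fin n → ℂ))
    (hz : mulTensor n (ExteriorAlgebra.ι ℂ μ) z = 0) :
    mulTensor n (wedgeVecs (Function.update v i μ)) z = 0 := by
  cases m with
  | zero => exact i.elim0
  | succ m =>
    set f := Function.update v i μ with hf
    set σ : Equiv.Perm (Fin (m + 1)) := Equiv.swap i (Fin.last m) with hσ
    have hperm : wedgeVecs (f ∘ σ) = Equiv.Perm.sign σ • wedgeVecs f := by
      rw [wedgeVecs_eq_iMulti, wedgeVecs_eq_iMulti]
      exact AlternatingMap.map_perm _ f σ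
    have hlast : (f ∘ σ) (Fin.last m) = μ := by
      show f (σ (Fin.last m)) = μ
      rw [hσ, Equiv.swap_apply_right, hf, Function.update_self]
    have h0 : mulTensor n (wedgeVecs (f ∘ σ)) z = 0 := by
      rw [wedgeVecs_snoc, hlast, mulTensor_mul, hz, map_zero]
    rcases Int.units_eq_one_or (Equiv.Perm.sign σ) with h | h <;> rw [h] at hperm
    · rw [one_smul] at hperm
      rw [← hperm]; exact h0
    · have hneg : wedgeVecs (f ∘ σ) = - wedgeVecs f := by
        rw [hperm]; simp [Units.smul_def]
      rw [hneg, mulTensor_neg, neg_eq_zero] at h0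
      exact h0

/-- The alternating family to build the extraction functional: determinant in top degree. -/
def detFamily (d : ℕ) : ∀ i : ℕ, (Ed d) [⋀^Fin i]→ₗ[ℂ] ℂ :=
  Function.update (fun i => (0 : (Ed d) [⋀^Fin i]→ₗ[ℂ] ℂ)) (d + 1)
    (Matrix.detRowAlternating : (Ed d) [⋀^Fin (d + 1)]→ₗ[ℂ] ℂ)

lemma detFamily_omegaTop (d : ℕ) :
    ExteriorAlgebra.liftAlternating (detFamily d) (omegaTop d) = 1 := by
  rw [omegaTop, wedgeVecs_eq_iMulti, ExteriorAlgebra.liftAlternating_apply_ιMulti]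
  have h1 : detFamily d (d + 1) =
      (Matrix.detRowAlternating : (Ed d) [⋀^Fin (d + 1)]→ₗ[ℂ] ℂ) :=
    Function.update_self _ _ _
  rw [h1]
  have h2 : (Matrix.of fun i : Fin (d + 1) => (Pi.single i 1 : Ed d)) =
      (1 : Matrix (Fin (d + 1)) (Fin (d + 1)) ℂ) := by
    ext i j
    simp [Matrix.one_apply, Pi.single_apply, eq_comm]
  show Matrix.det (Matrix.of fun i : Fin (d + 1) => (Pi.single i 1 : Ed d)) = 1
  rw [h2, Matrix.det_one]

lemma omegaTop_tmul_eq_zero {d n : ℕ} {x : Fin n → ℂ}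
    (h : omegaTop d ⊗ₜ[ℂ] x = 0) : x = 0 := by
  set L := ((TensorProduct.lid ℂ (Fin n → ℂ)).toLinearMap) ∘ₗ
      ((ExteriorAlgebra.liftAlternating (detFamily d)).rTensor (Fin n → ℂ)) with hL
  have h2 : L (omegaTop d ⊗ₜ[ℂ] x) = 0 := by rw [h, map_zero]
  have h3 : L (omegaTop d ⊗ₜ[ℂ] x) = x := by
    rw [hL, LinearMap.comp_apply, LinearMap.rTensor_tmul, detFamily_omegaTop]
    simp
  rw [← h3, h2]

end Aux


theorem stmt6 (d k n : ℕ) (hd : 1 ≤ d) (hk : k + 1 ≤ d) (hn : 1 ≤ n)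
    (γ : (Fin n → ℂ) →ₗ[ℂ] (ExteriorAlgebra ℂ (Ed d)) ⊗[ℂ] (Fin n → ℂ))
    (hγ : IsLivsicTensor d k n γ)
    (v : Fin (d - k) → Ed d) (u : Ed d)
    -- `G = γ(v₀,…,v_{d−k−1})`, invertible:
    (G : (Fin n → ℂ) →ₗ[ℂ] (Fin n → ℂ))
    (hG : ∀ w' : Fin n → ℂ, mulTensor n (wedgeVecs v) (γ w') = omegaTop d ⊗ₜ[ℂ] G w')
    (hGinv : Function.Bijective G)
    -- `Gi i = γ(v₀,…,v_{i−1},u,v_{i+1},…,v_{d−k−1})`: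
    (Gi : Fin (d - k) → ((Fin n → ℂ) →ₗ[ℂ] (Fin n → ℂ)))
    (hGi : ∀ (i : Fin (d - k)) (w' : Fin n → ℂ),
        mulTensor n (wedgeVecs (Function.update v i u)) (γ w') =
          omegaTop d ⊗ₜ[ℂ] (Gi i) w')
    -- `A i = G⁻¹ ∘ Gi i`:
    (A : Fin (d - k) → Module.End ℂ (Fin n → ℂ))
    (hA : ∀ i : Fin (d - k), G ∘ₗ A i = Gi i)
    -- the kernels at the intersection points span `ℂⁿ`:
    (r : ℕ) (t : Fin r → (Fin (d - k) → ℂ)) (ht : Function.Injective t)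
    (μ : Fin r → Ed d)
    (hμdef : ∀ s : Fin r, μ s = u + ∑ j : Fin (d - k), t s j • v j)
    (hspan : (⨆ s : Fin r,
        LinearMap.ker ((mulTensor n (ExteriorAlgebra.ι ℂ (μ s))) ∘ₗ γ)) = ⊤) :
    (∀ i j : Fin (d - k), Commute (A i) (A j)) ∧
      (∀ i : Fin (d - k), (⨆ c : ℂ, Module.End.eigenspace (A i) c) = ⊤) := by
  classical
  -- Key computation: on the kernel of `γ∧μ_s`, each `A i` acts as the scalar `-(t s i)`.
  have key : ∀ (s : Fin r) (w : Fin n → ℂ),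
      mulTensor n (ExteriorAlgebra.ι ℂ (μ s)) (γ w) = 0 →
      ∀ i : Fin (d - k), A i w = (-(t s i)) • w := by
    intro s w hw i
    have h0 : mulTensor n (wedgeVecs (Function.update v i (μ s))) (γ w) = 0 :=
      mulTensor_wedge_update_eq_zero v i (μ s) (γ w) hw
    -- expand the wedge via multilinearity and the alternating property
    have hexp : wedgeVecs (Function.update v i (μ s)) =
        wedgeVecs (Function.update v i u) + t s i • wedgeVecs v := by
      rw [hμdef s]
      rw [wedgeVecs_eq_iMulti, wedgeVecs_eq_iMulti, wedgeVecs_eq_iMulti]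
      set F := (ExteriorAlgebra.ιMulti ℂ (d - k) (M := Ed d)).toMultilinearMap with hF
      have hFdef : ∀ x : Ed d, F (Function.update v i x) =
          ExteriorAlgebra.ιMulti ℂ (d - k) (Function.update v i x) := fun _ => rfl
      let L : Ed d →ₗ[ℂ] ExteriorAlgebra ℂ (Ed d) := F.toLinearMap v i
      have hL : ∀ x : Ed d, L x = F (Function.update v i x) := fun _ => rfl
      calc F (Function.update v i (u + ∑ j : Fin (d - k), t s j • v j))
          = L (u + ∑ j : Fin (d - k), t s j • v j) := (hL _).symm
        _ = L u + ∑ j : Fin (d - k), t s j • L (v j) := by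
              rw [map_add, map_sum]
              simp only [map_smul]
        _ = F (Function.update v i u) + t s i • F v := by
              rw [hL]
              congr 1
              rw [Finset.sum_eq_single i]
              · rw [hL, Function.update_eq_self]
              · intro j _ hj
                rw [hL, hFdef]
                have : (ExteriorAlgebra.ιMulti ℂ (d - k)) (Function.update v i (v j)) = 0 := by
                  apply AlternatingMap.map_eq_zero_of_eq _ _ (i := i) (j := j)
                  · rw [Function.update_self, Function.update_of_ne hj]
                  · exact fun hij => hj (hij ▸ rfl)
                rw [this, smul_zero]
              · intro h; exact absurd (Finset.mem_univ i) h
    rw [hexp, mulTensor_add, mulTensor_smul, hGi, hG] at h0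
    rw [← TensorProduct.tmul_smul] at h0
    rw [← TensorProduct.tmul_add] at h0
    have hzero : Gi i w + t s i • G w = 0 := omegaTop_tmul_eq_zero h0
    apply hGinv.injective
    have hGA : G (A i w) = Gi i w := by
      rw [← hA i]; rfl
    rw [hGA, map_smul]
    rw [neg_smul, eq_neg_iff_add_eq_zero]
    exact hzero
  have hkermem : ∀ (s : Fin r) (w : Fin n → ℂ),
      w ∈ LinearMap.ker ((mulTensor n (ExteriorAlgebra.ι ℂ (μ s))) ∘ₗ γ) →
      ∀ i : Fin (d - k), A i w = (-(t s i)) • w := by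
    intro s w hw i
    rw [LinearMap.mem_ker, LinearMap.comp_apply] at hw
    exact key s w hw i
  constructor
  · intro i j
    show A i * A j = A j * A i
    apply LinearMap.ext
    intro w
    have hw : w ∈ ⨆ s : Fin r,
        LinearMap.ker ((mulTensor n (ExteriorAlgebra.ι ℂ (μ s))) ∘ₗ γ) := by
      rw [hspan]; trivial
    refine Submodule.iSup_induction (motive := fun x => (A i * A j) x = (A j * A i) x) _ hw
      ?_ (by simp) ?_
    · intro s x hx
      have hi := hkermem s x hx i
      have hj := hkermem s x hx j
      show A i (A j x) = A j (A i x)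
      rw [hi, hj, map_smul, map_smul, hi, hj, smul_comm]
    · intro x y hx hy
      show (A i * A j) (x + y) = (A j * A i) (x + y)
      rw [map_add, map_add, hx, hy]
  · intro i
    rw [eq_top_iff, ← hspan]
    apply iSup_le
    intro s
    refine le_trans ?_ (le_iSup (fun c => Module.End.eigenspace (A i) c) (-(t s i)))
    intro w hw
    rw [Module.End.mem_eigenspace_iff]
    exact hkermem s w hw i
end
end

section
/- Let X ⊆ ℙ(ℂ^{d+1}) be a σ-invariant subset, let V ⊆ ℂ^{d+1} be a real ℂ-subspace of dimension ℓ := d−k ≥ 1 with ℙ(V) ∩ X = ∅, and fix an integer m with 1 ≤ m ≤ ℓ. For a real subspace V_0 ⊆ V with dim V_0 = ℓ−m, let π_{V_0} denote the projection from ℙ(V_0): π_{V_0}([x̂]) = [P_{V_0^⊥}(x̂)] ∈ ℙ(V_0^⊥) for x̂ ∉ V_0. Then X is hyperbolic with respect to V if and only if for every real subspace V_0 ⊆ V with dim V_0 = ℓ−m, the projected set π_{V_0}(X) ⊆ ℙ(V_0^⊥) is hyperbolic (within the ambient space V_0^⊥) with respect to the m-dimensional real subspace V ∩ V_0^⊥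 of V_0^⊥. (Proposition 3.3.) -/
/-!
Points of `ℙ(ℂ^{d+1})` are modelled by their nonzero representative vectors, and subsets of
`ℙ(ℂ^{d+1})` by their cones: sets of nonzero vectors stable under multiplication by nonzero
scalars. `σ` is coordinatewise complex conjugation; a point `[x]` is real iff `σ(x)` is a
scalar multiple of `x`, and a `ℂ`-subspace `W` is real iff `σ(W) = W` (equivalently, `σ`
maps `W` into `W`, `σ` being an involution). `ℂ^{d+1}` carries the standard Hermitian inner
product (`EuclideanSpace`).
-/

noncomputable section

/-- `ℂ^{d+1}` with the standard Hermitian inner product. -/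
abbrev EE (d : ℕ) : Type := EuclideanSpace ℂ (Fin (d + 1))

/-- Coordinatewise complex conjugation `σ`. -/
def conjE {d : ℕ} (x : EE d) : EE d := WithLp.toLp 2 (fun i => (starRingEnd ℂ) (x i))

/-- `x` represents a real point of projective space: `σ(x)` is proportional to `x`. -/
def IsRealPt {d : ℕ} (x : EE d) : Prop := ∃ c : ℂ, conjE x = c • x

/-- A real (σ-invariant) `ℂ`-subspace. -/
def IsRealSub {d : ℕ} (V : Submodule ℂ (EE d)) : Prop := ∀ x ∈ V, conjE x ∈ V

/-- `X` is the cone over a subset of projective space: `0 ∉ X` and `X` is stable under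
multiplication by nonzero scalars. -/
def IsProjCone {d : ℕ} (X : Set (EE d)) : Prop :=
  (0 : EE d) ∉ X ∧ ∀ x ∈ X, ∀ c : ℂ, c ≠ 0 → c • x ∈ X

/-- `X` is σ-invariant. -/
def IsSigmaInv {d : ℕ} (X : Set (EE d)) : Prop := ∀ x ∈ X, conjE x ∈ X

/-- The projection from `ℙ(V₀)`: orthogonal projection onto `V₀ᗮ` (on cones). -/
def projPerp {d : ℕ} (V₀ : Submodule ℂ (EE d)) (x : EE d) : EE d :=
  (V₀ᗮ.orthogonalProjectionOnto x : EE d)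

/-- `X` (a cone over a subset of `ℙ(W)`) is hyperbolic, within the ambient subspace `W`,
with respect to the real subspace `V ≤ W`: `ℙ(V) ∩ X = ∅` and for every real subspace
`U` with `V ≤ U ≤ W` and `dim U = dim V + 1`, every point of `X ∩ ℙ(U)` is real. -/
def HyperbolicIn {d : ℕ} (W : Submodule ℂ (EE d)) (X : Set (EE d))
    (V : Submodule ℂ (EE d)) : Prop :=
  (∀ x ∈ X, x ∉ V) ∧
    ∀ U : Submodule ℂ (EE d), U ≤ W → V ≤ U →
      Module.finrank ℂ U = Module.finrank ℂ V + 1 →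
      IsRealSub U → ∀ x ∈ X, x ∈ U → IsRealPt x

/-- Hyperbolicity in the full ambient space `ℙ(ℂ^{d+1})`. -/
def Hyperbolic {d : ℕ} (X : Set (EE d)) (V : Submodule ℂ (EE d)) : Prop :=
  HyperbolicIn ⊤ X V

/-!
STATEMENT 9 (Proposition 3.3). Let `X ⊆ ℙ(ℂ^{d+1})` be σ-invariant, `V` real of dimension
`ℓ = d−k ≥ 1` with `ℙ(V) ∩ X = ∅`, and `1 ≤ m ≤ ℓ`. Then `X` is hyperbolic with respect
to `V` iff for every real subspace `V₀ ⊆ V` of dimension `ℓ−m`, the projected set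
`π_{V₀}(X) ⊆ ℙ(V₀ᗮ)` is hyperbolic within the ambient space `V₀ᗮ` with respect to the
`m`-dimensional real subspace `V ∩ V₀ᗮ`.
-/

variable {d : ℕ}

lemma conjE_add (x y : EE d) : conjE (x + y) = conjE x + conjE y := by
  ext i; simp [conjE]

lemma conjE_sub (x y : EE d) : conjE (x - y) = conjE x - conjE y := by
  ext i; simp [conjE]

lemma conjE_smul (c : ℂ) (x : EE d) : conjE (c • x) = (starRingEnd ℂ c) • conjE x := by
  ext i; simp [conjE]

lemma conjE_conjE (x : EE d) : conjE (conjE x) = x := by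
  ext i; simp [conjE]

@[simp] lemma conjE_zero : conjE (0 : EE d) = 0 := by
  ext i; simp [conjE]

lemma conjE_eq_zero {x : EE d} : conjE x = 0 ↔ x = 0 := by
  constructor
  · intro h
    have := congrArg conjE h
    rwa [conjE_conjE, conjE_zero] at this
  · rintro rfl; simp

lemma inner_conjE (x y : EE d) :
    (inner ℂ (conjE x) (conjE y) : ℂ) = starRingEnd ℂ (inner ℂ x y : ℂ) := by
  simp [conjE, PiLp.inner_apply, map_sum, mul_comm]

lemma IsRealSub.orthogonal {V : Submodule ℂ (EE d)} (hV : IsRealSub V) : IsRealSub Vᗮ := by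
  intro x hx v hv
  have h2 := hx (conjE v) (hV v hv)
  have h3 := inner_conjE (conjE v) x
  rw [conjE_conjE] at h3
  rw [h3, h2, map_zero]

lemma isRealSub_inf {V W : Submodule ℂ (EE d)} (hV : IsRealSub V) (hW : IsRealSub W) :
    IsRealSub (V ⊓ W) := fun x hx => ⟨hV x hx.1, hW x hx.2⟩

lemma isRealSub_sup {V W : Submodule ℂ (EE d)} (hV : IsRealSub V) (hW : IsRealSub W) :
    IsRealSub (V ⊔ W) := by
  intro x hx
  obtain ⟨y, hy, z, hz, rfl⟩ := Submodule.mem_sup.1 hx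
  rw [conjE_add]
  exact Submodule.add_mem_sup (hV y hy) (hW z hz)

lemma isRealSub_bot : IsRealSub (⊥ : Submodule ℂ (EE d)) := by
  intro x hx
  simp only [Submodule.mem_bot] at hx ⊢
  simp [hx]

lemma projPerp_mem (V₀ : Submodule ℂ (EE d)) (x : EE d) : projPerp V₀ x ∈ V₀ᗮ :=
  (V₀ᗮ.orthogonalProjectionOnto x).2

lemma sub_projPerp_mem (V₀ : Submodule ℂ (EE d)) (x : EE d) : x - projPerp V₀ x ∈ V₀ := by
  have h := V₀.starProjection_add_starProjection_orthogonal x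
  have h2 : (V₀.orthogonalProjectionOnto x : EE d) = x - projPerp V₀ x := eq_sub_of_add_eq h
  rw [← h2]
  exact (V₀.orthogonalProjectionOnto x).2

lemma mem_of_projPerp_eq_zero {V₀ : Submodule ℂ (EE d)} {x : EE d} (h : projPerp V₀ x = 0) :
    x ∈ V₀ := by
  have := sub_projPerp_mem V₀ x
  rwa [h, sub_zero] at this

lemma projPerp_smul (V₀ : Submodule ℂ (EE d)) (c : ℂ) (x : EE d) :
    projPerp V₀ (c • x) = c • projPerp V₀ x := by
  simp [projPerp, map_smul]

lemma projPerp_sub (V₀ : Submodule ℂ (EE d)) (x y : EE d) :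
    projPerp V₀ (x - y) = projPerp V₀ x - projPerp V₀ y := by
  simp [projPerp, map_sub]

lemma conjE_projPerp {V₀ : Submodule ℂ (EE d)} (hV₀ : IsRealSub V₀) (x : EE d) :
    conjE (projPerp V₀ x) = projPerp V₀ (conjE x) := by
  symm
  show V₀ᗮ.starProjection (conjE x) = _
  apply Submodule.eq_starProjection_of_mem_orthogonal
  · exact hV₀.orthogonal _ (projPerp_mem V₀ x)
  · rw [Submodule.orthogonal_orthogonal]
    have : conjE x - conjE (projPerp V₀ x) = conjE (x - projPerp V₀ x) := (conjE_sub _ _).symm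
    rw [this]
    exact hV₀ _ (sub_projPerp_mem V₀ x)

lemma finrank_inf_orthogonal {V₀ W : Submodule ℂ (EE d)} (h : V₀ ≤ W) :
    Module.finrank ℂ ↥(W ⊓ V₀ᗮ) + Module.finrank ℂ ↥V₀ = Module.finrank ℂ ↥W := by
  have hsup : V₀ ⊔ (W ⊓ V₀ᗮ) = W := by
    apply le_antisymm
    · exact sup_le h inf_le_left
    · intro w hw
      have h1 : w - projPerp V₀ w ∈ V₀ := sub_projPerp_mem V₀ w
      have h2 : projPerp V₀ w ∈ W ⊓ V₀ᗮ :=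
        ⟨by
          have : projPerp V₀ w = w - (w - projPerp V₀ w) := by abel
          rw [this]; exact Submodule.sub_mem W hw (h h1), projPerp_mem V₀ w⟩
      have : w = (w - projPerp V₀ w) + projPerp V₀ w := by abel
      rw [this]
      exact Submodule.add_mem_sup h1 h2
  have hinf : V₀ ⊓ (W ⊓ V₀ᗮ) = ⊥ := by
    apply le_antisymm _ bot_le
    intro z hz
    have h1 : z ∈ V₀ ⊓ V₀ᗮ := ⟨hz.1, hz.2.2⟩
    rwa [Submodule.inf_orthogonal_eq_bot] at h1
  have := Submodule.finrank_sup_add_finrank_inf_eq V₀ (W ⊓ V₀ᗮ)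
  rw [hsup, hinf] at this
  simp at this
  omega

lemma exists_real_avoiding (V T : Submodule ℂ (EE d)) (hV : IsRealSub V)
    (hTV : T ≤ V) (r : ℕ)
    (hr : Module.finrank ℂ T + r ≤ Module.finrank ℂ V) :
    ∃ V₀, V₀ ≤ V ∧ IsRealSub V₀ ∧ Module.finrank ℂ V₀ = r ∧ V₀ ⊓ T = ⊥ := by
  induction r with
  | zero => exact ⟨⊥, bot_le, isRealSub_bot, finrank_bot ℂ _, bot_inf_eq _⟩
  | succ r ih =>
    obtain ⟨V₀', hle, hreal, hdim, hinf⟩ := ih (by omega)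
    set W := V₀' ⊔ T with hW
    have hWle : W ≤ V := sup_le hle hTV
    have hWdim : Module.finrank ℂ W < Module.finrank ℂ V := by
      have h1 := Submodule.finrank_sup_add_finrank_inf_eq V₀' T
      rw [hinf] at h1
      simp only [finrank_bot] at h1
      rw [hdim, ← hW] at h1
      omega
    have hWne : W ≠ V := by
      intro he; rw [he] at hWdim; omega
    obtain ⟨x, hxV, hxW⟩ := SetLike.exists_of_lt (lt_of_le_of_ne hWle hWne)
    have hkey : ∃ v : EE d, conjE v = v ∧ v ∈ V ∧ v ∉ W := by
      by_cases ha : x + conjE x ∈ W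
      · by_cases hb : Complex.I • (x - conjE x) ∈ W
        · exfalso
          apply hxW
          have h1 : x - conjE x ∈ W := by
            have h2 := W.smul_mem (Complex.I⁻¹) hb
            rwa [smul_smul, inv_mul_cancel₀ Complex.I_ne_zero, one_smul] at h2
          have h2 : (x + conjE x) + (x - conjE x) = (2 : ℂ) • x := by
            rw [two_smul]; abel
          have h3 : (2 : ℂ) • x ∈ W := by rw [← h2]; exact W.add_mem ha h1
          have h4 := W.smul_mem ((2 : ℂ)⁻¹) h3
          rwa [smul_smul, inv_mul_cancel₀ two_ne_zero, one_smul] at h4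
        · refine ⟨Complex.I • (x - conjE x), ?_, V.smul_mem _ (V.sub_mem hxV (hV x hxV)), hb⟩
          rw [conjE_smul, conjE_sub, conjE_conjE, Complex.conj_I, neg_smul, ← smul_neg, neg_sub]
      · refine ⟨x + conjE x, ?_, V.add_mem hxV (hV x hxV), ha⟩
        rw [conjE_add, conjE_conjE]; abel
    obtain ⟨v, hvfix, hvV, hvW⟩ := hkey
    have hv0 : v ≠ 0 := by rintro rfl; exact hvW W.zero_mem
    refine ⟨V₀' ⊔ Submodule.span ℂ {v}, sup_le hle ?_, ?_, ?_, ?_⟩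
    · rw [Submodule.span_singleton_le_iff_mem]; exact hvV
    · apply isRealSub_sup hreal
      intro z hz
      obtain ⟨c, rfl⟩ := Submodule.mem_span_singleton.1 hz
      rw [conjE_smul, hvfix]
      exact Submodule.smul_mem _ _ (Submodule.mem_span_singleton_self v)
    · have hinf2 : V₀' ⊓ Submodule.span ℂ {v} = ⊥ := by
        apply le_antisymm _ bot_le
        rintro z ⟨hz1, hz2⟩
        obtain ⟨c, rfl⟩ := Submodule.mem_span_singleton.1 hz2
        rcases eq_or_ne c 0 with rfl | hc
        · simp
        · exfalso
          apply hvW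
          have : v = c⁻¹ • (c • v) := by rw [smul_smul, inv_mul_cancel₀ hc, one_smul]
          rw [this]
          exact le_sup_left (α := Submodule ℂ (EE d)) (V₀'.smul_mem _ hz1)
      have h1 := Submodule.finrank_sup_add_finrank_inf_eq V₀' (Submodule.span ℂ {v})
      rw [hinf2, finrank_span_singleton hv0] at h1
      simp only [finrank_bot] at h1
      omega
    · apply le_antisymm _ bot_le
      rintro z ⟨hz1, hzT⟩
      obtain ⟨u, hu, s, hs, rfl⟩ := Submodule.mem_sup.1 hz1
      obtain ⟨c, rfl⟩ := Submodule.mem_span_singleton.1 hs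
      rcases eq_or_ne c 0 with rfl | hc
      · simp only [zero_smul, add_zero] at hzT ⊢
        have : u ∈ V₀' ⊓ T := ⟨hu, hzT⟩
        rwa [hinf] at this
      · exfalso
        apply hvW
        have h1 : u + c • v ∈ W := le_sup_right (α := Submodule ℂ (EE d)) hzT
        have h2 : u ∈ W := le_sup_left (α := Submodule ℂ (EE d)) hu
        have h3 : c • v ∈ W := by
          have : c • v = (u + c • v) - u := by abel
          rw [this]; exact W.sub_mem h1 h2
        have : v = c⁻¹ • (c • v) := by rw [smul_smul, inv_mul_cancel₀ hc, one_smul]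
        rw [this]
        exact W.smul_mem _ h3

theorem stmt9 (d ℓ m : ℕ) (hℓ1 : 1 ≤ ℓ) (hℓ2 : ℓ ≤ d) (hm1 : 1 ≤ m) (hm2 : m ≤ ℓ)
    (X : Set (EE d)) (hXcone : IsProjCone X) (hXσ : IsSigmaInv X)
    (V : Submodule ℂ (EE d)) (hVreal : IsRealSub V)
    (hVdim : Module.finrank ℂ V = ℓ)
    (hdisj : ∀ x ∈ X, x ∉ V) :
    Hyperbolic X V ↔
      ∀ V₀ : Submodule ℂ (EE d), V₀ ≤ V → IsRealSub V₀ →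
        Module.finrank ℂ V₀ = ℓ - m →
        HyperbolicIn V₀ᗮ (projPerp V₀ '' X) (V ⊓ V₀ᗮ) := by
  constructor
  · intro hyp V₀ hV₀V hV₀real hV₀dim
    have hVV₀ : Module.finrank ℂ ↥(V ⊓ V₀ᗮ) = m := by
      have h := finrank_inf_orthogonal hV₀V
      rw [hV₀dim, hVdim] at h
      omega
    constructor
    · rintro y ⟨x, hx, rfl⟩ hy
      apply hdisj x hx
      have h1 : x - projPerp V₀ x ∈ V := hV₀V (sub_projPerp_mem V₀ x)
      have h2 : x = (x - projPerp V₀ x) + projPerp V₀ x := by abel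
      rw [h2]
      exact V.add_mem h1 hy.1
    · rintro U' hU'le hVle hU'dim hU'real y ⟨x, hx, rfl⟩ hyU'
      have hVU : V ≤ V₀ ⊔ U' := by
        intro v hv
        have h1 : v - projPerp V₀ v ∈ V₀ := sub_projPerp_mem V₀ v
        have h2 : projPerp V₀ v ∈ U' := by
          apply hVle
          refine ⟨?_, projPerp_mem V₀ v⟩
          have : projPerp V₀ v = v - (v - projPerp V₀ v) := by abel
          rw [this]
          exact V.sub_mem hv (hV₀V h1)
        have h3 : v = (v - projPerp V₀ v) + projPerp V₀ v := by abel
        rw [h3]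
        exact Submodule.add_mem_sup h1 h2
      have hUdim : Module.finrank ℂ ↥(V₀ ⊔ U') = Module.finrank ℂ V + 1 := by
        have h1 := Submodule.finrank_sup_add_finrank_inf_eq V₀ U'
        have h2 : V₀ ⊓ U' = ⊥ := by
          apply le_antisymm _ bot_le
          intro z hz
          have : z ∈ V₀ ⊓ V₀ᗮ := ⟨hz.1, hU'le hz.2⟩
          rwa [Submodule.inf_orthogonal_eq_bot] at this
        rw [h2] at h1
        simp only [finrank_bot] at h1
        rw [hU'dim, hVV₀, hV₀dim] at h1
        rw [hVdim]
        omega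
      have hUreal : IsRealSub (V₀ ⊔ U') := isRealSub_sup hV₀real hU'real
      have hxU : x ∈ V₀ ⊔ U' := by
        have h1 : x = (x - projPerp V₀ x) + projPerp V₀ x := by abel
        rw [h1]
        exact Submodule.add_mem_sup (sub_projPerp_mem V₀ x) hyU'
      obtain ⟨c, hc⟩ := hyp.2 (V₀ ⊔ U') le_top hVU hUdim hUreal x hx hxU
      exact ⟨c, by rw [conjE_projPerp hV₀real, hc, projPerp_smul]⟩
  · intro h
    refine ⟨hdisj, ?_⟩
    intro U hUtop hVU hUdim hUreal x hxX hxU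
    have hx0 : x ≠ 0 := fun h0 => hXcone.1 (h0 ▸ hxX)
    have hwX : conjE x ∈ X := hXσ x hxX
    have hw0 : conjE x ≠ 0 := fun h0 => hx0 (conjE_eq_zero.1 h0)
    set w := conjE x with hw
    set S := Submodule.span ℂ ({x, w} : Set (EE d)) with hS
    have hxS : x ∈ S := Submodule.subset_span (Set.mem_insert x _)
    have hwS : w ∈ S := Submodule.subset_span (Set.mem_insert_of_mem _ rfl)
    have hSdim : Module.finrank ℂ S ≤ 2 := by
      have h1 : S = Submodule.span ℂ {x} ⊔ Submodule.span ℂ {w} := by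
        rw [hS, show ({x, w} : Set (EE d)) = {x} ∪ {w} from rfl, Submodule.span_union]
      have h2 := Submodule.finrank_sup_add_finrank_inf_eq
        (Submodule.span ℂ {x}) (Submodule.span ℂ {w})
      rw [finrank_span_singleton hx0, finrank_span_singleton hw0] at h2
      rw [h1]
      omega
    have hTS : S ⊓ V < S := by
      apply lt_of_le_of_ne inf_le_left
      intro he
      rw [← he] at hxS
      exact hdisj x hxX hxS.2
    have hT1 : Module.finrank ℂ ↥(S ⊓ V) < Module.finrank ℂ S :=
      Submodule.finrank_lt_finrank_of_lt hTS
    obtain ⟨V₀, hV₀V, hV₀real, hV₀dim, hV₀T⟩ :=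
      exists_real_avoiding V (S ⊓ V) hVreal inf_le_right (ℓ - m) (by rw [hVdim]; omega)
    have hVV₀ : Module.finrank ℂ ↥(V ⊓ V₀ᗮ) = m := by
      have h1 := finrank_inf_orthogonal hV₀V
      rw [hV₀dim, hVdim] at h1
      omega
    have hU'dim : Module.finrank ℂ ↥(U ⊓ V₀ᗮ) = Module.finrank ℂ ↥(V ⊓ V₀ᗮ) + 1 := by
      have h1 := finrank_inf_orthogonal (hV₀V.trans hVU)
      rw [hV₀dim, hUdim, hVdim] at h1
      rw [hVV₀]
      omega
    have hπxU' : projPerp V₀ x ∈ U ⊓ V₀ᗮ := by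
      refine ⟨?_, projPerp_mem V₀ x⟩
      have h1 : projPerp V₀ x = x - (x - projPerp V₀ x) := by abel
      rw [h1]
      exact U.sub_mem hxU (hVU (hV₀V (sub_projPerp_mem V₀ x)))
    obtain ⟨c, hc⟩ := (h V₀ hV₀V hV₀real hV₀dim).2 (U ⊓ V₀ᗮ) inf_le_right
      (inf_le_inf_right _ hVU) hU'dim
      (isRealSub_inf hUreal hV₀real.orthogonal)
      (projPerp V₀ x) ⟨x, hxX, rfl⟩ hπxU'
    have h1 : projPerp V₀ (w - c • x) = 0 := by
      rw [projPerp_sub, projPerp_smul, hw, ← conjE_projPerp hV₀real, hc, sub_self]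
    have h2 : w - c • x ∈ V₀ ⊓ (S ⊓ V) :=
      ⟨mem_of_projPerp_eq_zero h1,
        S.sub_mem hwS (S.smul_mem _ hxS), hV₀V (mem_of_projPerp_eq_zero h1)⟩
    rw [hV₀T] at h2
    exact ⟨c, sub_eq_zero.1 ((Submodule.mem_bot ℂ).1 h2)⟩


end
end
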